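/- For all real t > 0 and all real v, |(e^{t+iv} - 1)/(t+iv)|² ≤ ((e^t - 1)/t)² · (1 - ((e^t - 1)² - t² e^t)/(e^t - 1)² · v²/(t² + v²)). -/

import Mathlib

open Complex Real

theorem modulus_sq_bound_one (t v : ℝ) (ht : 0 < t) :
    ‖(Complex.exp (t + v * Complex.I) - 1) / (t + v * Complex.I)‖ ^ 2
      ≤ ((Real.exp t - 1) / t) ^ 2 *
        (1 - ((Real.exp t - 1) ^ 2 - t ^ 2 * Real.exp t) / (Real.exp t - 1) ^ 2 *
          (v ^ 2 / (t ^ 2 + v ^ 2))) := by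
  have ht2 : (0:ℝ) < t ^ 2 + v ^ 2 := by positivity
  have hE : (0:ℝ) < Real.exp t := Real.exp_pos t
  have hE1 : (0:ℝ) < Real.exp t - 1 := by
    have : Real.exp 0 < Real.exp t := Real.exp_lt_exp.mpr ht
    simpa [Real.exp_zero] using this
  have hsc : Real.sin v ^ 2 + Real.cos v ^ 2 = 1 := Real.sin_sq_add_cos_sq v
  have habs : ‖(Complex.exp (t + v * Complex.I) - 1) / (t + v * Complex.I)‖ ^ 2
      = (Real.exp t ^ 2 - 2 * Real.exp t * Real.cos v + 1) / (t ^ 2 + v ^ 2) := by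
    rw [norm_div, div_pow, Complex.sq_norm, Complex.sq_norm]
    have h1 : Complex.normSq (Complex.exp (t + v * Complex.I) - 1)
        = Real.exp t ^ 2 - 2 * Real.exp t * Real.cos v + 1 := by
      simp [Complex.normSq_apply, Complex.exp_re, Complex.exp_im]
      nlinarith [hsc]
    have h2 : Complex.normSq ((t:ℂ) + v * Complex.I) = t ^ 2 + v ^ 2 := by
      simp [Complex.normSq_apply]; ring
    rw [h1, h2]
  rw [habs]
  have hRHS : ((Real.exp t - 1) / t) ^ 2 *
        (1 - ((Real.exp t - 1) ^ 2 - t ^ 2 * Real.exp t) / (Real.exp t - 1) ^ 2 *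
          (v ^ 2 / (t ^ 2 + v ^ 2)))
      = ((Real.exp t - 1) ^ 2 + v ^ 2 * Real.exp t) / (t ^ 2 + v ^ 2) := by
    field_simp
    ring
  rw [hRHS]
  have hcos : 1 - v ^ 2 / 2 ≤ Real.cos v := Real.one_sub_sq_div_two_le_cos
  rw [div_le_div_iff₀ ht2 ht2]
  have key : Real.exp t ^ 2 - 2 * Real.exp t * Real.cos v + 1
      ≤ (Real.exp t - 1) ^ 2 + v ^ 2 * Real.exp t := by nlinarith [hcos, hE]
  exact mul_le_mul_of_nonneg_right key ht2.le
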